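/- For any two policies π and π' on a finite MDP with discount γ ∈ [0,1), the ℓ¹ distance between their discounted future state distributions is bounded by an average total-variation divergence of the action distributions: ‖d^{π'} − d^π‖₁ ≤ (2γ/(1−γ)) · E_{s∼d^π}[ D_TV(π'∥π)[s] ], where D_TV(π'∥π)[s] = (1/2) Σ_a |π'(a|s) − π(a|s)|. -/

import Mathlib

open Finset

/-- ℙ(s_t = s | π, ρ0, P): time-indexed state distribution of a finite MDP. -/
noncomputable def visit {S A : Type*} [Fintype S] [Fintype A]
    (ρ0 : S → ℝ) (π : S → A → ℝ) (P : S → A → S → ℝ) : ℕ → S → ℝ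
  | 0 => ρ0
  | (t + 1) => fun s' => ∑ s, ∑ a, visit ρ0 π P t s * π s a * P s a s'

/-- Discounted future state distribution d^π(s) = (1−γ) Σ_t γ^t ℙ(s_t = s | π). -/
noncomputable def dvisit {S A : Type*} [Fintype S] [Fintype A]
    (ρ0 : S → ℝ) (π : S → A → ℝ) (P : S → A → S → ℝ) (γ : ℝ) (s : S) : ℝ :=
  (1 - γ) * ∑' t : ℕ, γ ^ t * visit ρ0 π P t s

section aux

variable {S A : Type*} [Fintype S] [Fintype A]

lemma visit_nonneg (ρ0 : S → ℝ) (π : S → A → ℝ) (P : S → A → S → ℝ)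
    (hρ0 : ∀ s, 0 ≤ ρ0 s) (hπ0 : ∀ s a, 0 ≤ π s a)
    (hP0 : ∀ s a s', 0 ≤ P s a s') : ∀ t s, 0 ≤ visit ρ0 π P t s := by
  intro t
  induction t with
  | zero => exact hρ0
  | succ t ih =>
    intro s'
    exact sum_nonneg fun s _ => sum_nonneg fun a _ =>
      mul_nonneg (mul_nonneg (ih s) (hπ0 s a)) (hP0 s a s')

lemma visit_sum_one (ρ0 : S → ℝ) (π : S → A → ℝ) (P : S → A → S → ℝ)
    (hρ1 : ∑ s, ρ0 s = 1) (hπ1 : ∀ s, ∑ a, π s a = 1)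
    (hP1 : ∀ s a, ∑ s', P s a s' = 1) : ∀ t, ∑ s, visit ρ0 π P t s = 1 := by
  intro t
  induction t with
  | zero => exact hρ1
  | succ t ih =>
    show ∑ s', ∑ s, ∑ a, visit ρ0 π P t s * π s a * P s a s' = 1
    rw [Finset.sum_comm]
    have h : ∀ s, ∑ s', ∑ a, visit ρ0 π P t s * π s a * P s a s'
        = visit ρ0 π P t s := by
      intro s
      rw [Finset.sum_comm]
      calc ∑ a, ∑ s', visit ρ0 π P t s * π s a * P s a s'
          = ∑ a, visit ρ0 π P t s * π s a := by
            refine Finset.sum_congr rfl fun a _ => ?_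
            rw [← Finset.mul_sum, hP1, mul_one]
        _ = visit ρ0 π P t s := by rw [← Finset.mul_sum, hπ1, mul_one]
    simp_rw [h, ih]

end aux

/-- ‖d^{π'} − d^π‖₁ ≤ (2γ/(1−γ)) · E_{s∼d^π}[ D_TV(π'∥π)[s] ]. -/
theorem dvisit_l1_bound_by_average_policy_tv {S A : Type*} [Fintype S] [Fintype A]
    (ρ0 : S → ℝ) (π π' : S → A → ℝ) (P : S → A → S → ℝ) (γ : ℝ)
    (hγ0 : 0 ≤ γ) (hγ1 : γ < 1)
    (hρ0 : ∀ s, 0 ≤ ρ0 s) (hρ1 : ∑ s, ρ0 s = 1)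
    (hπ0 : ∀ s a, 0 ≤ π s a) (hπ1 : ∀ s, ∑ a, π s a = 1)
    (hπ'0 : ∀ s a, 0 ≤ π' s a) (hπ'1 : ∀ s, ∑ a, π' s a = 1)
    (hP0 : ∀ s a s', 0 ≤ P s a s') (hP1 : ∀ s a, ∑ s', P s a s' = 1) :
    ∑ s, |dvisit ρ0 π' P γ s - dvisit ρ0 π P γ s|
      ≤ (2 * γ / (1 - γ)) *
        ∑ s, dvisit ρ0 π P γ s * ((1 / 2) * ∑ a, |π' s a - π s a|) := by
  set v : ℕ → S → ℝ := visit ρ0 π P with hv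
  set v' : ℕ → S → ℝ := visit ρ0 π' P with hv'
  have hv0 : ∀ t s, 0 ≤ v t s := visit_nonneg ρ0 π P hρ0 hπ0 hP0
  have hv'0 : ∀ t s, 0 ≤ v' t s := visit_nonneg ρ0 π' P hρ0 hπ'0 hP0
  have hv1 : ∀ t, ∑ s, v t s = 1 := visit_sum_one ρ0 π P hρ1 hπ1 hP1
  have hv'1 : ∀ t, ∑ s, v' t s = 1 := visit_sum_one ρ0 π' P hρ1 hπ'1 hP1
  have hvle1 : ∀ t s, v t s ≤ 1 := fun t s => (hv1 t) ▸
    Finset.single_le_sum (fun s _ => hv0 t s) (mem_univ s)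
  have hv'le1 : ∀ t s, v' t s ≤ 1 := fun t s => (hv'1 t) ▸
    Finset.single_le_sum (fun s _ => hv'0 t s) (mem_univ s)
  set e : ℕ → ℝ := fun t => ∑ s, |v' t s - v t s| with he
  set δ : ℕ → ℝ := fun t => ∑ s, v t s * ∑ a, |π' s a - π s a| with hδ
  have h1γ : (0:ℝ) < 1 - γ := by linarith
  -- step inequality
  have step : ∀ t, e (t + 1) ≤ e t + δ t := by
    intro t
    have key : ∀ s', |v' (t+1) s' - v (t+1) s'|
        ≤ ∑ s, ∑ a, |v' t s * π' s a - v t s * π s a| * P s a s' := by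
      intro s'
      have hexp : v' (t+1) s' - v (t+1) s'
          = ∑ s, ∑ a, (v' t s * π' s a - v t s * π s a) * P s a s' := by
        show (∑ s, ∑ a, v' t s * π' s a * P s a s')
            - (∑ s, ∑ a, v t s * π s a * P s a s') = _
        rw [← Finset.sum_sub_distrib]
        refine Finset.sum_congr rfl fun s _ => ?_
        rw [← Finset.sum_sub_distrib]
        refine Finset.sum_congr rfl fun a _ => ?_
        ring
      rw [hexp]
      refine (Finset.abs_sum_le_sum_abs _ _).trans (Finset.sum_le_sum fun s _ => ?_)
      refine (Finset.abs_sum_le_sum_abs _ _).trans (Finset.sum_le_sum fun a _ => ?_)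
      rw [abs_mul, abs_of_nonneg (hP0 s a s')]
    calc e (t+1) ≤ ∑ s', ∑ s, ∑ a, |v' t s * π' s a - v t s * π s a| * P s a s' :=
          Finset.sum_le_sum fun s' _ => key s'
      _ = ∑ s, ∑ a, |v' t s * π' s a - v t s * π s a| := by
          rw [Finset.sum_comm]
          refine Finset.sum_congr rfl fun s _ => ?_
          rw [Finset.sum_comm]
          simp_rw [← Finset.mul_sum, hP1, mul_one]
      _ ≤ ∑ s, ∑ a, (|v' t s - v t s| * π' s a + v t s * |π' s a - π s a|) := by
          refine Finset.sum_le_sum fun s _ => Finset.sum_le_sum fun a _ => ?_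
          have hring : v' t s * π' s a - v t s * π s a
              = (v' t s - v t s) * π' s a + v t s * (π' s a - π s a) := by ring
          rw [hring]
          refine (abs_add_le _ _).trans (le_of_eq ?_)
          rw [abs_mul, abs_mul, abs_of_nonneg (hπ'0 s a), abs_of_nonneg (hv0 t s)]
      _ = e t + δ t := by
          simp_rw [Finset.sum_add_distrib, ← Finset.mul_sum, hπ'1, mul_one]; rfl
  -- summability helper
  have hsum : ∀ (f : ℕ → ℝ) (C : ℝ), (∀ t, |f t| ≤ C) →
      Summable (fun t => γ ^ t * f t) := by
    intro f C hf
    refine Summable.of_norm_bounded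
      ((summable_geometric_of_lt_one hγ0 hγ1).mul_left C) fun t => ?_
    rw [Real.norm_eq_abs, abs_mul, abs_pow, abs_of_nonneg hγ0, mul_comm]
    exact mul_le_mul_of_nonneg_right (hf t) (pow_nonneg hγ0 t)
  have heb : ∀ t, |e t| ≤ 2 := by
    intro t
    rw [abs_of_nonneg (Finset.sum_nonneg fun s _ => abs_nonneg _)]
    calc e t ≤ ∑ s, (v' t s + v t s) := Finset.sum_le_sum fun s _ =>
          (abs_sub _ _).trans (by rw [abs_of_nonneg (hv'0 t s), abs_of_nonneg (hv0 t s)])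
      _ = 2 := by rw [Finset.sum_add_distrib, hv1, hv'1]; norm_num
  have hδb : ∀ t, |δ t| ≤ 2 := by
    intro t
    rw [abs_of_nonneg (Finset.sum_nonneg fun s _ => mul_nonneg (hv0 t s)
      (Finset.sum_nonneg fun a _ => abs_nonneg _))]
    calc δ t ≤ ∑ s, v t s * 2 := by
          refine Finset.sum_le_sum fun s _ => mul_le_mul_of_nonneg_left ?_ (hv0 t s)
          calc (∑ a, |π' s a - π s a|) ≤ ∑ a, (π' s a + π s a) :=
                Finset.sum_le_sum fun a _ => (abs_sub _ _).trans
                  (by rw [abs_of_nonneg (hπ'0 s a), abs_of_nonneg (hπ0 s a)])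
            _ = 2 := by rw [Finset.sum_add_distrib, hπ1, hπ'1]; norm_num
      _ = 2 := by rw [← Finset.sum_mul, hv1, one_mul]
  have hse : Summable (fun t => γ ^ t * e t) := hsum e 2 heb
  have hsδ : Summable (fun t => γ ^ t * δ t) := hsum δ 2 hδb
  have hsv : ∀ s, Summable (fun t => γ ^ t * v t s) := fun s =>
    hsum (fun t => v t s) 1 fun t => by
      rw [abs_of_nonneg (hv0 t s)]; exact hvle1 t s
  have hsv' : ∀ s, Summable (fun t => γ ^ t * v' t s) := fun s =>
    hsum (fun t => v' t s) 1 fun t => by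
      rw [abs_of_nonneg (hv'0 t s)]; exact hv'le1 t s
  have hsabs : ∀ s, Summable (fun t => γ ^ t * |v' t s - v t s|) := fun s =>
    hsum _ 2 fun t => by
      rw [abs_abs]
      calc |v' t s - v t s| ≤ |v' t s| + |v t s| := abs_sub _ _
        _ ≤ 2 := by
            rw [abs_of_nonneg (hv'0 t s), abs_of_nonneg (hv0 t s)]
            linarith [hvle1 t s, hv'le1 t s]
  set T : ℝ := ∑' t, γ ^ t * e t with hT
  set Δ : ℝ := ∑' t, γ ^ t * δ t with hΔ
  have hΔ0 : 0 ≤ Δ := tsum_nonneg fun t => mul_nonneg (pow_nonneg hγ0 t)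
    (Finset.sum_nonneg fun s _ => mul_nonneg (hv0 t s)
      (Finset.sum_nonneg fun a _ => abs_nonneg _))
  -- key tsum inequality: (1-γ) * T ≤ γ * Δ
  have e0 : e 0 = 0 := by
    simp only [he, hv, hv']
    show ∑ s, |visit ρ0 π' P 0 s - visit ρ0 π P 0 s| = 0
    show ∑ s, |ρ0 s - ρ0 s| = 0
    simp
  have hmid1 : Summable (fun t => γ ^ (t + 1) * e (t + 1)) :=
    hse.comp_injective (add_left_injective 1)
  have hmid2 : Summable (fun t => γ ^ (t + 1) * (e t + δ t)) :=
    ((hse.add hsδ).mul_left γ).congr fun t => by ring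
  have hTrec : T ≤ γ * (T + Δ) := by
    have h0 : T = ∑' t, γ ^ (t + 1) * e (t + 1) := by
      rw [hT, Summable.tsum_eq_zero_add hse]
      simp [e0]
    calc T = ∑' t, γ ^ (t + 1) * e (t + 1) := h0
      _ ≤ ∑' t, γ ^ (t + 1) * (e t + δ t) :=
          Summable.tsum_le_tsum (fun t => mul_le_mul_of_nonneg_left (step t)
            (pow_nonneg hγ0 _)) hmid1 hmid2
      _ = γ * (T + Δ) := by
          have hc : ∀ t : ℕ, γ ^ (t + 1) * (e t + δ t)
              = γ * (γ ^ t * e t + γ ^ t * δ t) := fun t => by ring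
          rw [tsum_congr hc, tsum_mul_left, Summable.tsum_add hse hsδ]
  have hkey : (1 - γ) * T ≤ γ * Δ := by nlinarith [hTrec]
  -- LHS ≤ (1-γ) * T
  have hLHS : ∑ s, |dvisit ρ0 π' P γ s - dvisit ρ0 π P γ s| ≤ (1 - γ) * T := by
    have h1 : ∀ s, |dvisit ρ0 π' P γ s - dvisit ρ0 π P γ s|
        ≤ (1 - γ) * ∑' t, γ ^ t * |v' t s - v t s| := by
      intro s
      unfold dvisit
      rw [← mul_sub, abs_mul, abs_of_nonneg h1γ.le]
      refine mul_le_mul_of_nonneg_left ?_ h1γ.le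
      rw [← Summable.tsum_sub (hsv' s) (hsv s)]
      have habs : ∀ t : ℕ, ‖γ ^ t * v' t s - γ ^ t * v t s‖
          = γ ^ t * |v' t s - v t s| := fun t => by
        rw [Real.norm_eq_abs, ← mul_sub, abs_mul, abs_pow, abs_of_nonneg hγ0]
      calc |∑' t, (γ ^ t * v' t s - γ ^ t * v t s)|
          ≤ ∑' t, ‖γ ^ t * v' t s - γ ^ t * v t s‖ := by
            rw [← Real.norm_eq_abs]
            exact norm_tsum_le_tsum_norm (((hsabs s)).congr fun t => (habs t).symm)
        _ = ∑' t, γ ^ t * |v' t s - v t s| := tsum_congr habs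
    calc ∑ s, |dvisit ρ0 π' P γ s - dvisit ρ0 π P γ s|
        ≤ ∑ s, (1 - γ) * ∑' t, γ ^ t * |v' t s - v t s| :=
          Finset.sum_le_sum fun s _ => h1 s
      _ = (1 - γ) * ∑ s, ∑' t, γ ^ t * |v' t s - v t s| := by rw [Finset.mul_sum]
      _ = (1 - γ) * T := by
          rw [hT]
          congr 1
          rw [← Summable.tsum_finsetSum fun s _ => hsabs s]
          refine tsum_congr fun t => ?_
          rw [he, Finset.mul_sum]
  -- RHS = γ * Δ
  have hRHS : (2 * γ / (1 - γ)) *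
      ∑ s, dvisit ρ0 π P γ s * ((1 / 2) * ∑ a, |π' s a - π s a|) = γ * Δ := by
    have h2 : ∑ s, dvisit ρ0 π P γ s * ((1 / 2) * ∑ a, |π' s a - π s a|)
        = (1 - γ) * (1 / 2) * Δ := by
      have h3 : ∀ s, dvisit ρ0 π P γ s * ((1 / 2) * ∑ a, |π' s a - π s a|)
          = (1 - γ) * (1 / 2) * ∑' t, γ ^ t * (v t s * ∑ a, |π' s a - π s a|) := by
        intro s
        unfold dvisit
        have hts : ∑' t, γ ^ t * (v t s * ∑ a, |π' s a - π s a|)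
            = (∑' t, γ ^ t * visit ρ0 π P t s) * ∑ a, |π' s a - π s a| := by
          rw [← tsum_mul_right]
          exact tsum_congr fun t => by ring
        rw [hts]
        ring
      simp_rw [h3]
      rw [← Finset.mul_sum]
      congr 1
      rw [← Summable.tsum_finsetSum fun s _ => ((hsv s).mul_right (∑ a, |π' s a - π s a|)).congr fun t => mul_assoc _ _ _]
      rw [hΔ]
      refine tsum_congr fun t => ?_
      rw [hδ, Finset.mul_sum]
    rw [h2]
    field_simp
  rw [hRHS]
  exact hLHS.trans hkey
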